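/- For every positive integer $k$, $\sum_{i=1}^{k} \frac{h_i^{(3)}}{2i-1} = h_k h_k^{(3)} + h_k^{(4)} - \sum_{i=1}^{k} \frac{h_i}{(2i-1)^3}$. -/

import Mathlib

open scoped BigOperators

noncomputable def H (k : ℕ) : ℝ := ∑ i ∈ Finset.Icc 1 k, (1 : ℝ) / i
noncomputable def Hp (n k : ℕ) : ℝ := ∑ i ∈ Finset.Icc 1 k, (1 : ℝ) / (i : ℝ) ^ n
noncomputable def oh (n k : ℕ) : ℝ := ∑ i ∈ Finset.Icc 1 k, (1 : ℝ) / (2 * (i : ℝ) - 1) ^ n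
noncomputable def Li (n : ℕ) (x : ℝ) : ℝ := ∑' m : ℕ, x ^ (m + 1) / ((m : ℝ) + 1) ^ n

lemma oh_succ (n k : ℕ) : oh n (k+1) = oh n k + 1 / (2 * ((k:ℝ)+1) - 1) ^ n := by
  unfold oh
  rw [Finset.sum_Icc_succ_top (Nat.le_add_left 1 k)]
  push_cast; ring_nf

theorem stmt18 (k : ℕ) (hk : 0 < k) : ∑ i ∈ Finset.Icc 1 k, oh 3 i / (2 * (i : ℝ) - 1) = oh 1 k * oh 3 k + oh 4 k - ∑ i ∈ Finset.Icc 1 k, oh 1 i / (2 * (i : ℝ) - 1)^3 := by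
  clear hk
  induction k with
  | zero => simp [oh]
  | succ k ih =>
    rw [Finset.sum_Icc_succ_top (Nat.le_add_left 1 k),
      Finset.sum_Icc_succ_top (Nat.le_add_left 1 k), ih,
      oh_succ 1, oh_succ 3, oh_succ 4]
    have h : (2 * ((k:ℝ)+1) - 1) ≠ 0 := by have : (0:ℝ) ≤ k := Nat.cast_nonneg k; nlinarith
    push_cast
    field_simp
    ring
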